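/- Let g be a positive integer, q = ⌈g²/2⌉ + g, and z = ⌈g²/2⌉. Define the q×q array P by: for j,k ∈ [1:q], P(j,k) = * if j ∈ {<k−z+1>_q, <k−z+2>_q, …, <k>_q}; otherwise j = <k+h>_q for a unique h ∈ [1:g], and P(j,k) = <j−(h−1)(g+2)>_q if 1 ≤ h ≤ ⌈g/2⌉, while P(j,k) = <k−(g−h)(g+2)>_q if ⌈g/2⌉ < h ≤ g. Then for every s ∈ [1:q] and all j,k ∈ [1:q] with P(j,k) = s, one has P(<s−1>_q, k) = *; consequently the map φ(s) = <s−1>_q assigns to each integer s ∈ [1:q] a star row for s, each row of P being assigned to exactly one integer, so P satisfies Condition 1 with parameter λ = 1. -/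

import Mathlib

/-- A `(K,F,Z,S)` placement delivery array: an `F × K` array whose entries are either `*`
(encoded as `none`) or integers in `[1:S]` (encoded as `some s` with `s : Fin S`). -/
def IsPDA (K F Z S : ℕ) (P : Fin F → Fin K → Option (Fin S)) : Prop :=
  (∀ k : Fin K, (Finset.univ.filter fun j : Fin F => P j k = none).card = Z) ∧
  (∀ s : Fin S, ∃ (j : Fin F) (k : Fin K), P j k = some s) ∧
  (∀ (j1 j2 : Fin F) (k1 k2 : Fin K) (s : Fin S),
      P j1 k1 = some s → P j2 k2 = some s → (j1, k1) ≠ (j2, k2) →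
      P j1 k2 = none ∧ P j2 k1 = none)

/-- A PDA is `g`-regular if each integer appears exactly `g` times. -/
def PDARegular (K F S g : ℕ) (P : Fin F → Fin K → Option (Fin S)) : Prop :=
  ∀ s : Fin S,
    (Finset.univ.filter fun jk : Fin F × Fin K => P jk.1 jk.2 = some s).card = g

/-- Row `i` is a star row for the integer `s`. -/
def PDAStarRow (K F S : ℕ) (P : Fin F → Fin K → Option (Fin S)) (i : Fin F) (s : Fin S) : Prop :=
  ∀ (j : Fin F) (k : Fin K), P j k = some s → P i k = none

/-- Condition 1 with parameter `lam`. -/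
def PDACondition1 (K F Z S lam : ℕ) (P : Fin F → Fin K → Option (Fin S)) : Prop :=
  lam ∣ F ∧ lam ∣ Z ∧
  (∀ (j : Fin F) (k : Fin K),
      P j k = none ↔
        P ⟨j.val % (F / lam), Nat.lt_of_le_of_lt (Nat.mod_le _ _) j.isLt⟩ k = none) ∧
  ∃ φ : Fin S → Fin (F / lam),
    (∀ s : Fin S, PDAStarRow K F S P (Fin.castLE (Nat.div_le_self F lam) (φ s)) s) ∧
    (∀ j : Fin (F / lam), (Finset.univ.filter fun s : Fin S => φ s = j).card * F = lam * S)

/-- Condition 2: every row contains the same number of stars. -/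
def PDACondition2 (K F S : ℕ) (P : Fin F → Fin K → Option (Fin S)) : Prop :=
  ∀ j1 j2 : Fin F,
    (Finset.univ.filter fun k : Fin K => P j1 k = none).card =
    (Finset.univ.filter fun k : Fin K => P j2 k = none).card

/-- `subMod a b q` computes `(a - b) mod q` (the 0-based residue), where the subtraction is
made safe in `ℕ` by first adding the multiple `q * b`. -/
def subMod (a b q : ℕ) : ℕ := (a + q * b - b) % q

lemma mod_addq_sub (q a b : ℕ) (ha : a < q) (hb : b < q) :
    (a + q - b) % q = if b ≤ a then a - b else a + q - b := by
  split
  · rw [show a + q - b = (a - b) + q by omega, Nat.add_mod_right,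
      Nat.mod_eq_of_lt (by omega)]
  · exact Nat.mod_eq_of_lt (by omega)

lemma cast_addq_sub (q a b : ℕ) (hb : b ≤ q) :
    ((a + q - b : ℕ) : ZMod q) = (a : ZMod q) - b := by
  rw [show a + q - b = a + (q - b) by omega, Nat.cast_add, Nat.cast_sub hb,
    ZMod.natCast_self]
  ring

lemma subMod_cast (a b q : ℕ) (hq : 0 < q) :
    ((subMod a b q : ℕ) : ZMod q) = (a : ZMod q) - b := by
  unfold subMod
  rw [ZMod.natCast_mod,
    Nat.cast_sub (le_trans (Nat.le_mul_of_pos_left b hq) (Nat.le_add_left _ _)),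
    Nat.cast_add, Nat.cast_mul, ZMod.natCast_self]
  ring

lemma sub_one_mod_eq_iff (q s j : ℕ) (hq : 0 < q) (hs : s < q) (hj : j < q) :
    (s + q - 1) % q = j ↔ s = (j + 1) % q := by
  rcases Nat.lt_or_ge (j + 1) q with h | h
  · rw [Nat.mod_eq_of_lt h]
    rcases Nat.eq_zero_or_pos s with rfl | h2
    · rw [Nat.zero_add, Nat.mod_eq_of_lt (by omega)]; omega
    · rw [show s + q - 1 = (s - 1) + q by omega, Nat.add_mod_right,
        Nat.mod_eq_of_lt (by omega)]; omega
  · have hj1 : (j + 1) % q = 0 := by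
      rw [show j + 1 = q by omega, Nat.mod_self]
    rw [hj1]
    rcases Nat.eq_zero_or_pos s with rfl | h2
    · rw [Nat.zero_add, Nat.mod_eq_of_lt (by omega)]; omega
    · rw [show s + q - 1 = (s - 1) + q by omega, Nat.add_mod_right,
        Nat.mod_eq_of_lt (by omega)]; omega

lemma key_lemma (g c q z : ℕ) (hg : 0 < g)
    (hc : c = (g ^ 2 + 1) / 2) (hq : q = c + g) (hz : z = c)
    (P : Fin q → Fin q → Option (Fin q))
    (hP : ∀ J K : Fin q, P J K =
      if (K.val + q - J.val) % q < z then none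
      else if (J.val + q - K.val) % q ≤ (g + 1) / 2 then
        some ⟨subMod J.val (((J.val + q - K.val) % q - 1) * (g + 2)) q,
          Nat.mod_lt _ (Nat.pos_of_ne_zero (by omega))⟩
      else
        some ⟨subMod K.val ((g - (J.val + q - K.val) % q) * (g + 2)) q,
          Nat.mod_lt _ (Nat.pos_of_ne_zero (by omega))⟩)
    (s J K : Fin q) (hs : P J K = some s) :
    (K.val + q - (s.val + q - 1) % q) % q < z := by
  obtain ⟨G, hG⟩ : ∃ G, G = g ^ 2 := ⟨_, rfl⟩
  have hG1 : 1 ≤ G := hG ▸ Nat.one_le_pow 2 g hg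
  have hGg : g ≤ G := hG ▸ Nat.le_self_pow (by norm_num) g
  have hG2 : g ^ 2 ≤ 2 * c := by rw [← hG]; omega
  have hq0 : 0 < q := by omega
  haveI : NeZero q := ⟨by omega⟩
  rw [hP J K] at hs
  have e1 := mod_addq_sub q J.val K.val J.isLt K.isLt
  have e2 := mod_addq_sub q K.val J.val K.isLt J.isLt
  split_ifs at hs with h1 h2
  · -- Case A : h ≤ (g+1)/2
    set h := (J.val + q - K.val) % q with hh_def
    have hh : 1 ≤ h ∧ h ≤ g := by
      rw [e1]; rw [e2] at h1
      split_ifs at h1 ⊢ <;> omega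
    obtain ⟨h', hh'⟩ : ∃ h', h = h' + 1 := ⟨h - 1, by omega⟩
    have hsv : s.val = subMod J.val ((h - 1) * (g + 2)) q := by
      rw [Option.some_inj] at hs
      exact (congrArg Fin.val hs).symm
    set t := (h - 1) * (g + 1) with ht_def
    have hbound : t < c := by
      have k0 : 2 * h' + 1 ≤ g := by omega
      have k1 : (2 * h' + 1) * (g + 1) ≤ g * (g + 1) :=
        Nat.mul_le_mul_right _ k0
      have ht' : t = h' * (g + 1) := by rw [ht_def, hh', Nat.add_sub_cancel]
      nlinarith [k1, hG2]
    have hrlt : (s.val + q - 1) % q < q := Nat.mod_lt _ hq0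
    have e_r : (((s.val + q - 1) % q : ℕ) : ZMod q) = (s.val : ZMod q) - 1 := by
      rw [ZMod.natCast_mod, cast_addq_sub q s.val 1 (by omega), Nat.cast_one]
    have e_h : ((h : ℕ) : ZMod q) = (J.val : ZMod q) - (K.val : ZMod q) := by
      rw [hh_def, ZMod.natCast_mod, cast_addq_sub q J.val K.val K.isLt.le]
    have e_s : (s.val : ZMod q)
        = (J.val : ZMod q) - (((h - 1) * (g + 2) : ℕ) : ZMod q) := by
      rw [hsv, subMod_cast _ _ _ hq0]
    have e_t : ((t : ℕ) : ZMod q) + ((h : ℕ) : ZMod q)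
        = (((h - 1) * (g + 2) : ℕ) : ZMod q) + 1 := by
      have hnat : t + h = (h - 1) * (g + 2) + 1 := by
        rw [ht_def, hh']; simp only [Nat.add_sub_cancel]; ring
      exact_mod_cast congrArg (Nat.cast : ℕ → ZMod q) hnat
    have e_main : ((K.val + q - (s.val + q - 1) % q : ℕ) : ZMod q)
        = ((t : ℕ) : ZMod q) := by
      rw [cast_addq_sub q K.val _ hrlt.le, e_r, e_s]
      linear_combination e_h - e_t
    have hXt : (K.val + q - (s.val + q - 1) % q) % q = t := by
      calc (K.val + q - (s.val + q - 1) % q) % q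
          = (((K.val + q - (s.val + q - 1) % q : ℕ)) : ZMod q).val :=
            (ZMod.val_natCast _ _).symm
        _ = ((t : ℕ) : ZMod q).val := by rw [e_main]
        _ = t := ZMod.val_cast_of_lt (by omega)
    rw [hXt]; omega
  · -- Case B : h > (g+1)/2
    set h := (J.val + q - K.val) % q with hh_def
    have hh : 1 ≤ h ∧ h ≤ g := by
      rw [e1]; rw [e2] at h1
      split_ifs at h1 ⊢ <;> omega
    have h2' : (g + 1) / 2 < h := lt_of_not_ge h2
    have hsv : s.val = subMod K.val ((g - h) * (g + 2)) q := by
      rw [Option.some_inj] at hs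
      exact (congrArg Fin.val hs).symm
    set t := (g - h) * (g + 2) + 1 with ht_def
    set m := g - h with hm_def
    have hbound : t < c := by
      have k0 : 2 * m + 2 ≤ g := by omega
      have k1 : (2 * m + 2) * (g + 2) ≤ g * (g + 2) :=
        Nat.mul_le_mul_right _ k0
      nlinarith [k1, hG2]
    have hrlt : (s.val + q - 1) % q < q := Nat.mod_lt _ hq0
    have e_r : (((s.val + q - 1) % q : ℕ) : ZMod q) = (s.val : ZMod q) - 1 := by
      rw [ZMod.natCast_mod, cast_addq_sub q s.val 1 (by omega), Nat.cast_one]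
    have e_s : (s.val : ZMod q)
        = (K.val : ZMod q) - ((m * (g + 2) : ℕ) : ZMod q) := by
      rw [hsv, subMod_cast _ _ _ hq0]
    have e_t : ((t : ℕ) : ZMod q) = ((m * (g + 2) : ℕ) : ZMod q) + 1 := by
      exact_mod_cast congrArg (Nat.cast : ℕ → ZMod q) ht_def
    have e_main : ((K.val + q - (s.val + q - 1) % q : ℕ) : ZMod q)
        = ((t : ℕ) : ZMod q) := by
      rw [cast_addq_sub q K.val _ hrlt.le, e_r, e_s]
      linear_combination -e_t
    have hXt : (K.val + q - (s.val + q - 1) % q) % q = t := by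
      calc (K.val + q - (s.val + q - 1) % q) % q
          = (((K.val + q - (s.val + q - 1) % q : ℕ)) : ZMod q).val :=
            (ZMod.val_natCast _ _).symm
        _ = ((t : ℕ) : ZMod q).val := by rw [e_main]
        _ = t := ZMod.val_cast_of_lt (by omega)
    rw [hXt]; omega

/-- Lemma 3, second part: for the array of Construction 3 (with
`q = ⌈g²/2⌉ + g`, `z = ⌈g²/2⌉`, encoded 0-based as in Statement 11), for every integer
`s ∈ [1:q]` and all `j,k` with `P(j,k) = s` one has `P(<s-1>_q, k) = *`; in 0-based form the
row `<s-1>_q` becomes `(s₀ + q - 1) % q` for `s₀ = s - 1`. Consequently `P` satisfies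
Condition 1 with parameter `λ = 1`. -/
theorem pda_construction3_cond1 (g c q z : ℕ) (hg : 0 < g)
    (hc : c = (g ^ 2 + 1) / 2) (hq : q = c + g) (hz : z = c)
    (P : Fin q → Fin q → Option (Fin q))
    (hP : ∀ J K : Fin q, P J K =
      if (K.val + q - J.val) % q < z then none
      else if (J.val + q - K.val) % q ≤ (g + 1) / 2 then
        some ⟨subMod J.val (((J.val + q - K.val) % q - 1) * (g + 2)) q,
          by simp only [subMod]; exact Nat.mod_lt _ (by omega)⟩
      else
        some ⟨subMod K.val ((g - (J.val + q - K.val) % q) * (g + 2)) q,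
          by simp only [subMod]; exact Nat.mod_lt _ (by omega)⟩) :
    (∀ (s : Fin q) (J K : Fin q), P J K = some s →
        P ⟨(s.val + q - 1) % q, Nat.mod_lt _ (by omega)⟩ K = none) ∧
    PDACondition1 q q z q 1 P := by
  have hq0 : 0 < q := by
    have := Nat.one_le_pow 2 g hg
    omega
  have key : ∀ (s J K : Fin q), P J K = some s →
      (K.val + q - (s.val + q - 1) % q) % q < z :=
    key_lemma g c q z hg hc hq hz P hP
  have part1 : ∀ (s : Fin q) (J K : Fin q), P J K = some s →
      P ⟨(s.val + q - 1) % q, Nat.mod_lt _ (by omega)⟩ K = none := by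
    intro s J K hs
    rw [hP]
    exact if_pos (key s J K hs)
  refine ⟨part1, one_dvd _, one_dvd _, ?_, ?_⟩
  · intro j k
    have hj : (⟨j.val % (q / 1), Nat.lt_of_le_of_lt (Nat.mod_le _ _) j.isLt⟩ : Fin q) = j := by
      apply Fin.ext
      simp only [Nat.div_one]
      exact Nat.mod_eq_of_lt j.isLt
    rw [hj]
  · refine ⟨fun s => ⟨(s.val + q - 1) % q, by
      rw [Nat.div_one]; exact Nat.mod_lt _ hq0⟩, ?_, ?_⟩
    · intro s j k hs
      have := part1 s j k hs
      convert this using 2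
      rfl
    · intro j
      have hj : j.val < q := by have := j.isLt; omega
      have hcard : (Finset.univ.filter fun s : Fin q =>
          (⟨(s.val + q - 1) % q, by rw [Nat.div_one]; exact Nat.mod_lt _ hq0⟩ :
            Fin (q / 1)) = j).card = 1 := by
        rw [show (Finset.univ.filter fun s : Fin q =>
            (⟨(s.val + q - 1) % q, by rw [Nat.div_one]; exact Nat.mod_lt _ hq0⟩ :
              Fin (q / 1)) = j)
            = {(⟨(j.val + 1) % q, Nat.mod_lt _ hq0⟩ : Fin q)} from ?_]
        · exact Finset.card_singleton _
        · ext s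
          simp only [Finset.mem_filter, Finset.mem_univ, true_and,
            Finset.mem_singleton, Fin.ext_iff]
          exact sub_one_mod_eq_iff q s.val j.val hq0 s.isLt hj
      rw [hcard]
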